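/- Let G be a group with subgroups A, B ≤ G such that B normalizes A, A ∩ B = {e}, and G = AB (inner semidirect product G = [AB]). Then every atomically generated subgroup H ≤ G (i.e., H = ⟨S⟩ for some atomic S ⊆ G) is the inner semidirect product of H ∩ A and H ∩ B: that is, H ∩ B normalizes H ∩ A, (H ∩ A) ∩ (H ∩ B) = {e}, and every h ∈ H can be written as h = a·b with a ∈ H ∩ A and b ∈ H ∩ B. -/

import Mathlib

/-- Let `G = [AB]` be an inner semidirect product of subgroups `A, B ≤ G`.
Then every atomically generated subgroup `H = ⟨S⟩` (with `S ⊆ A ∪ B`) is the inner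
semidirect product of `H ∩ A` and `H ∩ B`: `H ∩ B` normalizes `H ∩ A`,
`(H ∩ A) ∩ (H ∩ B) = {e}`, and every `h ∈ H` factors as `h = a·b` with
`a ∈ H ∩ A`, `b ∈ H ∩ B`. -/
theorem stmt_5 {G : Type*} [Group G] (A B : Subgroup G)
    (hnorm : B ≤ Subgroup.normalizer (A : Set G))
    (hint : A ⊓ B = ⊥)
    (hprod : ∀ g : G, ∃ a ∈ A, ∃ b ∈ B, g = a * b)
    (S : Set G) (hS : S ⊆ (A : Set G) ∪ (B : Set G))
    (H : Subgroup G) (hH : H = Subgroup.closure S) :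
    (∀ b ∈ H ⊓ B, ∀ a ∈ H ⊓ A, b * a * b⁻¹ ∈ H ⊓ A) ∧
    (H ⊓ A) ⊓ (H ⊓ B) = ⊥ ∧
    (∀ h ∈ H, ∃ a ∈ H ⊓ A, ∃ b ∈ H ⊓ B, h = a * b) := by
  have hconj : ∀ b ∈ H ⊓ B, ∀ a ∈ H ⊓ A, b * a * b⁻¹ ∈ H ⊓ A := by
    intro b hb a ha
    obtain ⟨hbH, hbB⟩ := Subgroup.mem_inf.mp hb
    obtain ⟨haH, haA⟩ := Subgroup.mem_inf.mp ha
    exact Subgroup.mem_inf.mpr ⟨mul_mem (mul_mem hbH haH) (inv_mem hbH),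
      (Subgroup.mem_normalizer_iff.mp (hnorm hbB) a).mp haA⟩
  refine ⟨hconj, ?_, ?_⟩
  · rw [eq_bot_iff]
    intro x hx
    rw [← hint]
    exact ⟨hx.1.2, hx.2.2⟩
  · set K : Subgroup G :=
      { carrier := {g | ∃ a ∈ H ⊓ A, ∃ b ∈ H ⊓ B, g = a * b}
        one_mem' := ⟨1, one_mem _, 1, one_mem _, (one_mul 1).symm⟩
        mul_mem' := by
          rintro x y ⟨a1, ha1, b1, hb1, rfl⟩ ⟨a2, ha2, b2, hb2, rfl⟩
          refine ⟨a1 * (b1 * a2 * b1⁻¹), mul_mem ha1 (hconj b1 hb1 a2 ha2),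
            b1 * b2, mul_mem hb1 hb2, ?_⟩
          group
        inv_mem' := by
          rintro x ⟨a, ha, b, hb, rfl⟩
          refine ⟨b⁻¹ * a⁻¹ * b⁻¹⁻¹, hconj b⁻¹ (inv_mem hb) a⁻¹ (inv_mem ha),
            b⁻¹, inv_mem hb, ?_⟩
          group } with hK
    intro h hh
    have hSH : S ⊆ (H : Set G) := by
      rw [hH]; exact Subgroup.subset_closure
    have hle : H ≤ K := by
      rw [hH]
      apply Subgroup.closure_le K |>.mpr
      intro s hs
      rcases hS hs with h' | h'
      · exact ⟨s, ⟨hSH hs, h'⟩, 1, one_mem _, (mul_one s).symm⟩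
      · exact ⟨1, one_mem _, s, ⟨hSH hs, h'⟩, (one_mul s).symm⟩
    exact hle hh
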